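/- Let ε ∈ (0, 1/3]. Let S be a real random variable with mean μ > 0 and standard deviation at most εμ/√f(ε), and let R be uniform on [1−ε, 1+ε], independent of S. Then P(SR ≤ μ − εμ) ≤ 1/4 and P(SR ≥ μ + εμ) ≤ 1/4. -/

import Mathlib

open MeasureTheory ProbabilityTheory Real

/-- The uniform probability measure on the interval `[a, b]`. -/
noncomputable def uniformIcc (a b : ℝ) : Measure ℝ :=
  (ENNReal.ofReal (b - a))⁻¹ • (MeasureTheory.volume.restrict (Set.Icc a b))

/-- The median of `2*n+1` real values: their `(n+1)`-st smallest value. -/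
noncomputable def medianOf {n : ℕ} (v : Fin (2 * n + 1) → ℝ) : ℝ :=
  (Multiset.sort (↑(List.ofFn v)) (· ≤ ·)).get ⟨n, by simp; omega⟩

/-- The nuisance factor `f(ε) = (1+ε)/((1-ε)² (1+ε-ε²))`. -/
noncomputable def nuisance (ε : ℝ) : ℝ := (1 + ε) / ((1 - ε) ^ 2 * (1 + ε - ε ^ 2))

section SmoothedTailAux

lemma uniformIcc_apply {ε : ℝ} (hε : 0 < ε) (T : Set ℝ) (hT : MeasurableSet T) :
    uniformIcc (1 - ε) (1 + ε) T
      = (ENNReal.ofReal (2*ε))⁻¹ * volume (T ∩ Set.Icc (1-ε) (1+ε)) := by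
  rw [uniformIcc, Measure.smul_apply, Measure.restrict_apply hT,
    show (1 + ε - (1 - ε)) = 2*ε by ring, smul_eq_mul]

lemma uniformIcc_univ {ε : ℝ} (hε : 0 < ε) : uniformIcc (1-ε) (1+ε) Set.univ = 1 := by
  rw [uniformIcc_apply hε _ MeasurableSet.univ, Set.univ_inter, Real.volume_Icc,
    show (1 + ε - (1 - ε)) = 2*ε by ring]
  exact ENNReal.inv_mul_cancel (by simp [hε]) ENNReal.ofReal_ne_top

lemma lower_pointwise (ε μ a b D : ℝ) (hε : 0 < ε) (hε' : ε ≤ 1/3) (hμ : 0 < μ)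
    (ha : 0 ≤ a) (hb : 0 ≤ b) (hD : 0 < D)
    (hkey : ∀ τ : ℝ, 0 ≤ τ → τ ≤ 2*ε/(1+ε) →
      (1-ε)*τ*D ≤ (a*τ+b)^2*(2*ε*(1-τ))) (s : ℝ) :
    uniformIcc (1-ε) (1+ε) {r | s * r ≤ μ - ε*μ} ≤
      ENNReal.ofReal ((a*((μ-s)/μ)+b)^2 / D) := by
  have h1e : 0 < 1 - ε := by linarith
  have h1e' : 0 < 1 + ε := by linarith
  have ht1 : (0:ℝ) < 2*ε/(1+ε) := by positivity
  have ht1' : 2*ε/(1+ε) < 1 := by rw [div_lt_one h1e']; linarith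
  have hmeas : MeasurableSet {r : ℝ | s*r ≤ μ - ε*μ} :=
    measurableSet_le (measurable_id.const_mul s) measurable_const
  -- q is at least 1 beyond t₁
  have hq1 : ∀ τ' : ℝ, 2*ε/(1+ε) ≤ τ' → 1 ≤ (a*τ'+b)^2 / D := by
    intro τ' h
    have h0 := hkey (2*ε/(1+ε)) ht1.le le_rfl
    have e1 : (1-ε)*(2*ε/(1+ε)) = 2*ε*(1 - 2*ε/(1+ε)) := by field_simp; ring
    have hpos : 0 < 2*ε*(1 - 2*ε/(1+ε)) := by nlinarith
    have hD' : D ≤ (a*(2*ε/(1+ε))+b)^2 := by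
      have : D * (2*ε*(1 - 2*ε/(1+ε))) ≤ (a*(2*ε/(1+ε))+b)^2 * (2*ε*(1 - 2*ε/(1+ε))) := by
        calc D * (2*ε*(1 - 2*ε/(1+ε))) = (1-ε)*(2*ε/(1+ε))*D := by rw [e1]; ring
          _ ≤ _ := h0
      exact le_of_mul_le_mul_right this hpos
    rw [le_div_iff₀ hD, one_mul]
    calc D ≤ (a*(2*ε/(1+ε))+b)^2 := hD'
      _ ≤ (a*τ'+b)^2 := by
          have h1 : a*(2*ε/(1+ε))+b ≤ a*τ'+b := by nlinarith
          have h2 : 0 ≤ a*(2*ε/(1+ε))+b := by positivity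
          nlinarith
  rcases le_or_gt s ((1-ε)*μ/(1+ε)) with hs | hs
  · -- far-left case: bound measure by 1
    calc uniformIcc (1-ε) (1+ε) {r | s * r ≤ μ - ε*μ}
        ≤ uniformIcc (1-ε) (1+ε) Set.univ := measure_mono (Set.subset_univ _)
      _ = 1 := uniformIcc_univ hε
      _ ≤ ENNReal.ofReal ((a*((μ-s)/μ)+b)^2 / D) := by
          rw [ENNReal.one_le_ofReal]
          apply hq1
          have hs' : s*(1+ε) ≤ (1-ε)*μ := by rwa [← le_div_iff₀ h1e']
          rw [div_le_div_iff₀ h1e' hμ]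
          nlinarith
  rcases le_or_gt s μ with hs2 | hs2
  · -- middle case
    have hspos : 0 < s := lt_trans (by positivity) hs
    have hτ0 : 0 ≤ (μ-s)/μ := div_nonneg (by linarith) hμ.le
    have hτ1 : (μ-s)/μ ≤ 2*ε/(1+ε) := by
      rw [div_le_div_iff₀ hμ h1e']
      rw [div_lt_iff₀ h1e'] at hs
      nlinarith
    have hset : {r : ℝ | s*r ≤ μ - ε*μ} = Set.Iic ((μ-ε*μ)/s) := by
      ext r; simp [Set.mem_Iic, le_div_iff₀ hspos, mul_comm]
    have hcs : (μ-ε*μ)/s ≤ 1+ε := by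
      rw [div_le_iff₀ hspos]
      rw [div_lt_iff₀ h1e'] at hs
      nlinarith
    have hinter : Set.Iic ((μ-ε*μ)/s) ∩ Set.Icc (1-ε) (1+ε)
        = Set.Icc (1-ε) ((μ-ε*μ)/s) := by
      ext r
      simp only [Set.mem_inter_iff, Set.mem_Iic, Set.mem_Icc]
      constructor
      · rintro ⟨h1, h2, h3⟩; exact ⟨h2, h1⟩
      · rintro ⟨h1, h2⟩; exact ⟨h2, h1, le_trans h2 hcs⟩
    rw [hset, uniformIcc_apply hε _ measurableSet_Iic, hinter, Real.volume_Icc,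
      ← ENNReal.ofReal_inv_of_pos (show (0:ℝ) < 2*ε by positivity),
      ← ENNReal.ofReal_mul (by positivity)]
    apply ENNReal.ofReal_le_ofReal
    have key := hkey ((μ-s)/μ) hτ0 hτ1
    have key' : (1-ε)*(μ-s)*D ≤ (a*((μ-s)/μ)+b)^2*(2*ε*s) := by
      have h2 := mul_le_mul_of_nonneg_right key hμ.le
      calc (1-ε)*(μ-s)*D = (1-ε)*((μ-s)/μ)*D*μ := by field_simp
        _ ≤ (a*((μ-s)/μ)+b)^2*(2*ε*(1-(μ-s)/μ))*μ := h2
        _ = (a*((μ-s)/μ)+b)^2*(2*ε*s) := by field_simp; ring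
    have goal' : ((μ-ε*μ)/s - (1-ε)) * D * s ≤ (a*((μ-s)/μ)+b)^2 * (2*ε) * s := by
      have e3' : ((μ-ε*μ)/s - (1-ε)) * s = (1-ε)*(μ-s) := by field_simp
      have e3 : ((μ-ε*μ)/s - (1-ε)) * D * s = (1-ε)*(μ-s)*D := by
        calc ((μ-ε*μ)/s - (1-ε)) * D * s = (((μ-ε*μ)/s - (1-ε)) * s) * D := by ring
          _ = (1-ε)*(μ-s)*D := by rw [e3']
      rw [e3]
      calc (1-ε)*(μ-s)*D ≤ (a*((μ-s)/μ)+b)^2*(2*ε*s) := key'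
        _ = (a*((μ-s)/μ)+b)^2 * (2*ε) * s := by ring
    have goal2 := le_of_mul_le_mul_right goal' hspos
    rw [inv_mul_eq_div, div_le_div_iff₀ (by positivity) hD]
    exact goal2
  · -- right case: empty intersection
    rw [uniformIcc_apply hε _ hmeas]
    have hempty : {r : ℝ | s*r ≤ μ - ε*μ} ∩ Set.Icc (1-ε) (1+ε) = ∅ := by
      ext r
      simp only [Set.mem_inter_iff, Set.mem_setOf_eq, Set.mem_Icc, Set.mem_empty_iff_false,
        iff_false, not_and, and_imp]
      intro h1 h2 h3
      nlinarith
    rw [hempty]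
    simp
lemma upper_pointwise (ε μ a b D : ℝ) (hε : 0 < ε) (hε' : ε ≤ 1/3) (hμ : 0 < μ)
    (ha : 0 ≤ a) (hb : 0 ≤ b) (hD : 0 < D)
    (hkey : ∀ u : ℝ, 0 ≤ u → (1+ε)*u*D ≤ (a*u+b)^2*(2*ε*(1+u))) (s : ℝ) :
    uniformIcc (1-ε) (1+ε) {r | μ + ε*μ ≤ s * r} ≤
      ENNReal.ofReal ((a*((s-μ)/μ)+b)^2 / D) := by
  have h1e : 0 < 1 - ε := by linarith
  have h1e' : 0 < 1 + ε := by linarith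
  have hu1 : (0:ℝ) < 2*ε/(1-ε) := by positivity
  have hmeas : MeasurableSet {r : ℝ | μ + ε*μ ≤ s*r} :=
    measurableSet_le measurable_const (measurable_id.const_mul s)
  have hq1 : ∀ u' : ℝ, 2*ε/(1-ε) ≤ u' → 1 ≤ (a*u'+b)^2 / D := by
    intro u' h
    have h0 := hkey (2*ε/(1-ε)) hu1.le
    have e1 : (1+ε)*(2*ε/(1-ε)) = 2*ε*(1 + 2*ε/(1-ε)) := by field_simp; ring
    have hpos : 0 < 2*ε*(1 + 2*ε/(1-ε)) := by positivity
    have hD' : D ≤ (a*(2*ε/(1-ε))+b)^2 := by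
      have : D * (2*ε*(1 + 2*ε/(1-ε))) ≤ (a*(2*ε/(1-ε))+b)^2 * (2*ε*(1 + 2*ε/(1-ε))) := by
        calc D * (2*ε*(1 + 2*ε/(1-ε))) = (1+ε)*(2*ε/(1-ε))*D := by rw [e1]; ring
          _ ≤ _ := h0
      exact le_of_mul_le_mul_right this hpos
    rw [le_div_iff₀ hD, one_mul]
    calc D ≤ (a*(2*ε/(1-ε))+b)^2 := hD'
      _ ≤ (a*u'+b)^2 := by
          have h1 : a*(2*ε/(1-ε))+b ≤ a*u'+b := by nlinarith
          have h2 : 0 ≤ a*(2*ε/(1-ε))+b := by positivity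
          nlinarith
  rcases lt_or_ge s μ with hs | hs
  · -- left case: empty intersection
    rw [uniformIcc_apply hε _ hmeas]
    have hempty : {r : ℝ | μ + ε*μ ≤ s*r} ∩ Set.Icc (1-ε) (1+ε) = ∅ := by
      ext r
      simp only [Set.mem_inter_iff, Set.mem_setOf_eq, Set.mem_Icc, Set.mem_empty_iff_false,
        iff_false, not_and, and_imp]
      intro h1 h2 h3
      rcases le_or_gt s 0 with hs0 | hs0
      · nlinarith
      · nlinarith
    rw [hempty]
    simp
  rcases lt_or_ge s ((1+ε)*μ/(1-ε)) with hs2 | hs2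
  · -- middle case
    have hspos : 0 < s := lt_of_lt_of_le hμ hs
    have hu0 : 0 ≤ (s-μ)/μ := div_nonneg (by linarith) hμ.le
    have hset : {r : ℝ | μ + ε*μ ≤ s*r} = Set.Ici ((μ+ε*μ)/s) := by
      ext r; simp [Set.mem_Ici, div_le_iff₀ hspos, mul_comm]
    have hcs : 1-ε ≤ (μ+ε*μ)/s := by
      rw [le_div_iff₀ hspos]
      rw [lt_div_iff₀ h1e] at hs2
      nlinarith
    have hcs2 : (μ+ε*μ)/s ≤ 1+ε := by
      rw [div_le_iff₀ hspos]
      nlinarith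
    have hinter : Set.Ici ((μ+ε*μ)/s) ∩ Set.Icc (1-ε) (1+ε)
        = Set.Icc ((μ+ε*μ)/s) (1+ε) := by
      ext r
      simp only [Set.mem_inter_iff, Set.mem_Ici, Set.mem_Icc]
      constructor
      · rintro ⟨h1, h2, h3⟩; exact ⟨h1, h3⟩
      · rintro ⟨h1, h2⟩; exact ⟨h1, le_trans hcs h1, h2⟩
    rw [hset, uniformIcc_apply hε _ measurableSet_Ici, hinter, Real.volume_Icc,
      ← ENNReal.ofReal_inv_of_pos (show (0:ℝ) < 2*ε by positivity),
      ← ENNReal.ofReal_mul (by positivity)]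
    apply ENNReal.ofReal_le_ofReal
    have key := hkey ((s-μ)/μ) hu0
    have key' : (1+ε)*(s-μ)*D ≤ (a*((s-μ)/μ)+b)^2*(2*ε*s) := by
      have h2 := mul_le_mul_of_nonneg_right key hμ.le
      calc (1+ε)*(s-μ)*D = (1+ε)*((s-μ)/μ)*D*μ := by field_simp
        _ ≤ (a*((s-μ)/μ)+b)^2*(2*ε*(1+(s-μ)/μ))*μ := h2
        _ = (a*((s-μ)/μ)+b)^2*(2*ε*s) := by field_simp; ring
    have goal' : (1+ε - (μ+ε*μ)/s) * D * s ≤ (a*((s-μ)/μ)+b)^2 * (2*ε) * s := by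
      have e3' : (1+ε - (μ+ε*μ)/s) * s = (1+ε)*(s-μ) := by field_simp
      have e3 : (1+ε - (μ+ε*μ)/s) * D * s = (1+ε)*(s-μ)*D := by
        calc (1+ε - (μ+ε*μ)/s) * D * s = ((1+ε - (μ+ε*μ)/s) * s) * D := by ring
          _ = (1+ε)*(s-μ)*D := by rw [e3']
      rw [e3]
      calc (1+ε)*(s-μ)*D ≤ (a*((s-μ)/μ)+b)^2*(2*ε*s) := key'
        _ = (a*((s-μ)/μ)+b)^2 * (2*ε) * s := by ring
    have goal2 := le_of_mul_le_mul_right goal' hspos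
    rw [inv_mul_eq_div, div_le_div_iff₀ (by positivity) hD]
    exact goal2
  · -- far-right case: bound measure by 1
    calc uniformIcc (1-ε) (1+ε) {r | μ + ε*μ ≤ s * r}
        ≤ uniformIcc (1-ε) (1+ε) Set.univ := measure_mono (Set.subset_univ _)
      _ = 1 := uniformIcc_univ hε
      _ ≤ ENNReal.ofReal ((a*((s-μ)/μ)+b)^2 / D) := by
          rw [ENNReal.one_le_ofReal]
          apply hq1
          have hs' : (1+ε)*μ ≤ s*(1-ε) := by rwa [← div_le_iff₀ h1e]
          rw [div_le_div_iff₀ h1e hμ]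
          nlinarith

lemma lintegral_affine_sq {Ω : Type*} [MeasureSpace Ω] [IsProbabilityMeasure (ℙ : Measure Ω)]
    (S : Ω → ℝ) (hS2 : MemLp S 2 ℙ) (μa c1 c0 D : ℝ)
    (hmean : ∫ ω, S ω ∂ℙ = μa) (hD : 0 < D) :
    ∫⁻ ω, ENNReal.ofReal ((c1 * S ω + c0)^2 / D) ∂ℙ
      = ENNReal.ofReal ((c1^2 * variance S ℙ + (c1*μa+c0)^2)/D) := by
  have hint1 : Integrable S ℙ := hS2.integrable one_le_two
  have hint2 : Integrable (fun ω => S ω^2) ℙ := hS2.integrable_sq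
  have hexp : (fun ω => (c1 * S ω + c0)^2 / D)
      = fun ω => (c1^2/D) * S ω^2 + ((2*c1*c0/D) * S ω + c0^2/D) := by
    funext ω; field_simp; ring
  have hg : Integrable (fun ω => (c1 * S ω + c0)^2 / D) ℙ := by
    rw [hexp]
    exact (hint2.const_mul _).add ((hint1.const_mul _).add (integrable_const _))
  rw [← ofReal_integral_eq_lintegral_ofReal hg (ae_of_all _ fun ω => by positivity)]
  congr 1
  have hVar : variance S ℙ = (∫ ω, S ω^2 ∂ℙ) - μa^2 := by
    rw [variance_eq_sub hS2]
    simp only [Pi.pow_apply]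
    rw [hmean]
  calc ∫ ω, (c1*S ω+c0)^2/D ∂ℙ
      = ∫ ω, ((c1^2/D) * S ω^2 + ((2*c1*c0/D) * S ω + c0^2/D)) ∂ℙ := by rw [hexp]
    _ = (c1^2/D) * (∫ ω, S ω^2 ∂ℙ) + ((2*c1*c0/D) * μa + c0^2/D) := by
        have hfi : Integrable (fun ω => (c1^2/D) * S ω^2) ℙ := hint2.const_mul _
        have h1i : Integrable (fun ω => (2*c1*c0/D) * S ω) ℙ := hint1.const_mul _
        have hgi : Integrable (fun ω => (2*c1*c0/D) * S ω + c0^2/D) ℙ :=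
          h1i.add (integrable_const _)
        rw [integral_add hfi hgi, integral_add h1i (integrable_const _),
          integral_const_mul, integral_const_mul, integral_const, hmean]
        simp
    _ = (c1^2 * variance S ℙ + (c1*μa+c0)^2)/D := by rw [hVar]; field_simp; ring

lemma glue_lower {Ω : Type*} [MeasureSpace Ω] [IsProbabilityMeasure (ℙ : Measure Ω)]
    (ε μ a b D : ℝ) (hε : 0 < ε) (hε' : ε ≤ 1/3) (hμ : 0 < μ)
    (S R : Ω → ℝ) (hSm : Measurable S) (hRm : Measurable R) (hS2 : MemLp S 2 ℙ)
    (hmean : ∫ ω, S ω ∂ℙ = μ)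
    (hR : Measure.map R ℙ = uniformIcc (1 - ε) (1 + ε))
    (hindep : IndepFun S R ℙ)
    (ha : 0 ≤ a) (hb : 0 ≤ b) (hD : 0 < D)
    (hkey : ∀ τ : ℝ, 0 ≤ τ → τ ≤ 2*ε/(1+ε) → (1-ε)*τ*D ≤ (a*τ+b)^2*(2*ε*(1-τ)))
    (hfin : a^2/μ^2 * variance S ℙ + b^2 ≤ D/4) :
    ℙ {ω | S ω * R ω ≤ μ - ε*μ} ≤ 1/4 := by
  haveI hprob : IsProbabilityMeasure (uniformIcc (1-ε) (1+ε)) := ⟨uniformIcc_univ hε⟩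
  have hE : MeasurableSet {p : ℝ×ℝ | p.1*p.2 ≤ μ - ε*μ} :=
    measurableSet_le (measurable_fst.mul measurable_snd) measurable_const
  have hmap : ℙ {ω | S ω * R ω ≤ μ - ε*μ}
      = ((Measure.map S ℙ).prod (uniformIcc (1-ε) (1+ε))) {p : ℝ×ℝ | p.1*p.2 ≤ μ - ε*μ} := by
    rw [← hR, ← (indepFun_iff_map_prod_eq_prod_map_map hSm.aemeasurable hRm.aemeasurable).1 hindep,
      Measure.map_apply (hSm.prodMk hRm) hE]
    rfl
  have hmf : Measurable fun s : ℝ => ENNReal.ofReal (((-(a/μ)) * s + (a+b))^2 / D) :=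
    ENNReal.measurable_ofReal.comp
      ((((measurable_const.mul measurable_id).add_const (a+b)).pow_const 2).div_const D)
  calc ℙ {ω | S ω * R ω ≤ μ - ε*μ}
      = ∫⁻ s, uniformIcc (1-ε) (1+ε) (Prod.mk s ⁻¹' {p : ℝ×ℝ | p.1*p.2 ≤ μ - ε*μ})
          ∂(Measure.map S ℙ) := by rw [hmap, Measure.prod_apply hE]
    _ ≤ ∫⁻ s, ENNReal.ofReal (((-(a/μ)) * s + (a+b))^2 / D) ∂(Measure.map S ℙ) := by
        apply lintegral_mono
        intro s
        calc uniformIcc (1-ε) (1+ε) (Prod.mk s ⁻¹' {p : ℝ×ℝ | p.1*p.2 ≤ μ - ε*μ})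
            = uniformIcc (1-ε) (1+ε) {r | s * r ≤ μ - ε*μ} := rfl
          _ ≤ ENNReal.ofReal ((a*((μ-s)/μ)+b)^2 / D) :=
              lower_pointwise ε μ a b D hε hε' hμ ha hb hD hkey s
          _ = ENNReal.ofReal (((-(a/μ)) * s + (a+b))^2 / D) := by
              rw [show a*((μ-s)/μ)+b = (-(a/μ)) * s + (a+b) by field_simp; ring]
    _ = ∫⁻ ω, ENNReal.ofReal (((-(a/μ)) * S ω + (a+b))^2 / D) ∂ℙ := lintegral_map hmf hSm
    _ = ENNReal.ofReal (((-(a/μ))^2 * variance S ℙ + ((-(a/μ))*μ+(a+b))^2)/D) :=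
        lintegral_affine_sq S hS2 μ _ _ D hmean hD
    _ ≤ 1/4 := by
        have e1 : (-(a/μ))*μ+(a+b) = b := by field_simp; ring
        have e2 : (-(a/μ))^2 = a^2/μ^2 := by rw [neg_sq, div_pow]
        rw [e1, e2]
        have hle : (a^2/μ^2 * variance S ℙ + b^2)/D ≤ 1/4 := by
          rw [div_le_iff₀ hD]; linarith
        calc ENNReal.ofReal ((a^2/μ^2 * variance S ℙ + b^2)/D)
            ≤ ENNReal.ofReal (1/4) := ENNReal.ofReal_le_ofReal hle
          _ = 1/4 := by
              rw [ENNReal.ofReal_div_of_pos (by norm_num), ENNReal.ofReal_one,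
                ENNReal.ofReal_ofNat]

lemma glue_upper {Ω : Type*} [MeasureSpace Ω] [IsProbabilityMeasure (ℙ : Measure Ω)]
    (ε μ a b D : ℝ) (hε : 0 < ε) (hε' : ε ≤ 1/3) (hμ : 0 < μ)
    (S R : Ω → ℝ) (hSm : Measurable S) (hRm : Measurable R) (hS2 : MemLp S 2 ℙ)
    (hmean : ∫ ω, S ω ∂ℙ = μ)
    (hR : Measure.map R ℙ = uniformIcc (1 - ε) (1 + ε))
    (hindep : IndepFun S R ℙ)
    (ha : 0 ≤ a) (hb : 0 ≤ b) (hD : 0 < D)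
    (hkey : ∀ u : ℝ, 0 ≤ u → (1+ε)*u*D ≤ (a*u+b)^2*(2*ε*(1+u)))
    (hfin : a^2/μ^2 * variance S ℙ + b^2 ≤ D/4) :
    ℙ {ω | μ + ε*μ ≤ S ω * R ω} ≤ 1/4 := by
  haveI hprob : IsProbabilityMeasure (uniformIcc (1-ε) (1+ε)) := ⟨uniformIcc_univ hε⟩
  have hE : MeasurableSet {p : ℝ×ℝ | μ + ε*μ ≤ p.1*p.2} :=
    measurableSet_le measurable_const (measurable_fst.mul measurable_snd)
  have hmap : ℙ {ω | μ + ε*μ ≤ S ω * R ω}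
      = ((Measure.map S ℙ).prod (uniformIcc (1-ε) (1+ε))) {p : ℝ×ℝ | μ + ε*μ ≤ p.1*p.2} := by
    rw [← hR, ← (indepFun_iff_map_prod_eq_prod_map_map hSm.aemeasurable hRm.aemeasurable).1 hindep,
      Measure.map_apply (hSm.prodMk hRm) hE]
    rfl
  have hmf : Measurable fun s : ℝ => ENNReal.ofReal (((a/μ) * s + (b-a))^2 / D) :=
    ENNReal.measurable_ofReal.comp
      ((((measurable_const.mul measurable_id).add_const (b-a)).pow_const 2).div_const D)
  calc ℙ {ω | μ + ε*μ ≤ S ω * R ω}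
      = ∫⁻ s, uniformIcc (1-ε) (1+ε) (Prod.mk s ⁻¹' {p : ℝ×ℝ | μ + ε*μ ≤ p.1*p.2})
          ∂(Measure.map S ℙ) := by rw [hmap, Measure.prod_apply hE]
    _ ≤ ∫⁻ s, ENNReal.ofReal (((a/μ) * s + (b-a))^2 / D) ∂(Measure.map S ℙ) := by
        apply lintegral_mono
        intro s
        calc uniformIcc (1-ε) (1+ε) (Prod.mk s ⁻¹' {p : ℝ×ℝ | μ + ε*μ ≤ p.1*p.2})
            = uniformIcc (1-ε) (1+ε) {r | μ + ε*μ ≤ s * r} := rfl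
          _ ≤ ENNReal.ofReal ((a*((s-μ)/μ)+b)^2 / D) :=
              upper_pointwise ε μ a b D hε hε' hμ ha hb hD hkey s
          _ = ENNReal.ofReal (((a/μ) * s + (b-a))^2 / D) := by
              rw [show a*((s-μ)/μ)+b = (a/μ) * s + (b-a) by field_simp; ring]
    _ = ∫⁻ ω, ENNReal.ofReal (((a/μ) * S ω + (b-a))^2 / D) ∂ℙ := lintegral_map hmf hSm
    _ = ENNReal.ofReal (((a/μ)^2 * variance S ℙ + ((a/μ)*μ+(b-a))^2)/D) :=
        lintegral_affine_sq S hS2 μ _ _ D hmean hD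
    _ ≤ 1/4 := by
        have e1 : (a/μ)*μ+(b-a) = b := by field_simp; ring
        have e2 : (a/μ)^2 = a^2/μ^2 := by rw [div_pow]
        rw [e1, e2]
        have hle : (a^2/μ^2 * variance S ℙ + b^2)/D ≤ 1/4 := by
          rw [div_le_iff₀ hD]; linarith
        calc ENNReal.ofReal ((a^2/μ^2 * variance S ℙ + b^2)/D)
            ≤ ENNReal.ofReal (1/4) := ENNReal.ofReal_le_ofReal hle
          _ = 1/4 := by
              rw [ENNReal.ofReal_div_of_pos (by norm_num), ENNReal.ofReal_one,
                ENNReal.ofReal_ofNat]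

theorem keyA (e t : ℝ) (he : 0 < e) (he2 : e ≤ 1/5) (ht1 : 0 ≤ t) (ht2 : t ≤ 2*e/(1+e)) :
    (1-e)*t*(8*e^2*(1-e)^2) ≤ (1*t+e*(1-2*e))^2*(2*e*(1-t)) := by
  have h1e : (0:ℝ) < 1+e := by linarith
  have ht2' : t*(1+e) ≤ 2*e := by rwa [← le_div_iff₀ h1e]
  have hrngA : 2*e ≤ (1-2*e)^2*(1+e) := by nlinarith [pow_pos he 3]
  have h4 : t ≤ (1-2*e)^2 :=
    le_of_mul_le_mul_right (by nlinarith : t*(1+e) ≤ (1-2*e)^2*(1+e)) h1e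
  nlinarith [mul_nonneg (sq_nonneg (t-e)) (sub_nonneg.2 h4), he.le,
    mul_nonneg he.le (mul_nonneg (sq_nonneg (t-e)) (sub_nonneg.2 h4))]

theorem keyB (e t : ℝ) (he : 1/5 ≤ e) (he2 : e ≤ 1/3) (ht1 : 0 ≤ t) (ht2 : t ≤ 2*e/(1+e)) :
    (1-e)*t*(1000000*e^2*(1-e)^2) ≤ ((25-17*e)^2*t+8*e*(25-33*e))^2*(2*e*(1-t)) := by
  have h1e : (0:ℝ) < 1+e := by linarith
  have he0 : (0:ℝ) < e := by linarith
  have ht2' : t*(1+e) ≤ 2*e := by rwa [← le_div_iff₀ h1e]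
  have hrng : 2*e*(25-17*e)^2 ≤ (25-33*e)^2*(1+e) := by nlinarith [sq_nonneg (e-1/5), sq_nonneg (e-1/3)]
  have h4 : (25-17*e)^2*t ≤ (25-33*e)^2 := by
    have hq : (0:ℝ) ≤ (25-17*e)^2 := sq_nonneg _
    have h5 : (25-17*e)^2*(t*(1+e)) ≤ (25-17*e)^2*(2*e) := mul_le_mul_of_nonneg_left ht2' hq
    exact le_of_mul_le_mul_right (by nlinarith : (25-17*e)^2*t*(1+e) ≤ (25-33*e)^2*(1+e)) h1e
  nlinarith [mul_nonneg he0.le (mul_nonneg (sq_nonneg ((25-17*e)*t-8*e)) (sub_nonneg.2 h4))]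

theorem keyC (e u : ℝ) (he : 0 < e) (he2 : e ≤ 1/3) (hu : 0 ≤ u) :
    (1+e)*u*(8*e^2*(1+e)^2) ≤ (1*u+e*(1+2*e))^2*(2*e*(1+u)) := by
  nlinarith [mul_nonneg he.le (mul_nonneg (sq_nonneg (u-e)) (by nlinarith [sq_nonneg (1+2*e)] : (0:ℝ) ≤ u + (1+2*e)^2))]

theorem objA (e V : ℝ) (he : 0 < e) (he2 : e ≤ 1/3) (h1e : (0:ℝ) < 1+e)
    (hV : V ≤ e^2*(1-e)^2*(1+e-e^2)/(1+e)) :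
    V + (e*(1-2*e))^2 ≤ (8*e^2*(1-e)^2)/4 := by
  have key : e^2*(1-e)^2*(1+e-e^2)/(1+e) ≤ 2*e^2*(1-e)^2 - e^2*(1-2*e)^2 := by
    rw [div_le_iff₀ h1e]
    nlinarith [mul_nonneg (mul_nonneg he.le he.le) he.le, sq_nonneg e, mul_nonneg (sq_nonneg e) (sq_nonneg e)]
  nlinarith [key, hV]

theorem objC (e V : ℝ) (he : 0 < e) (he2 : e ≤ 1/3) (h1e : (0:ℝ) < 1+e)
    (hV : V ≤ e^2*(1-e)^2*(1+e-e^2)/(1+e)) :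
    V + (e*(1+2*e))^2 ≤ (8*e^2*(1+e)^2)/4 := by
  have key : e^2*(1-e)^2*(1+e-e^2)/(1+e) ≤ 2*e^2*(1+e)^2 - e^2*(1+2*e)^2 := by
    rw [div_le_iff₀ h1e]
    nlinarith [mul_nonneg (mul_nonneg he.le he.le) he.le, mul_nonneg (sq_nonneg e) (sq_nonneg e)]
  nlinarith [key, hV]

theorem objB (e V : ℝ) (he : 1/5 ≤ e) (he2 : e ≤ 1/3) (h1e : (0:ℝ) < 1+e) (he0 : (0:ℝ) < e)
    (hV : V ≤ e^2*(1-e)^2*(1+e-e^2)/(1+e)) :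
    (25-17*e)^4 * V + (8*e*(25-33*e))^2 ≤ (1000000*e^2*(1-e)^2)/4 := by
  have hb : 4*(25-17*e)^4*(1+e-e^2)*(1-e)^2 + 256*(25-33*e)^2*(1+e) ≤ 10^6*(1+e)*(1-e)^2 := by
    have a : (0:ℝ) ≤ e - 1/5 := by linarith
    have b : (0:ℝ) ≤ 1/3 - e := by linarith
    nlinarith [mul_nonneg a b, mul_nonneg (mul_nonneg a a) b, mul_nonneg (mul_nonneg a b) b,
      mul_nonneg (mul_nonneg (mul_nonneg a a) a) b, mul_nonneg (mul_nonneg (mul_nonneg a b) b) b,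
      mul_nonneg (mul_nonneg (mul_nonneg a a) b) b, sq_nonneg (e - 1/4), sq_nonneg e]
  have hV' : V*(1+e) ≤ e^2*(1-e)^2*(1+e-e^2) := by
    have := mul_le_mul_of_nonneg_right hV h1e.le
    calc V*(1+e) ≤ e^2*(1-e)^2*(1+e-e^2)/(1+e)*(1+e) := this
      _ = e^2*(1-e)^2*(1+e-e^2) := by field_simp
  have hq : (0:ℝ) ≤ (25-17*e)^4 := by positivity
  have h2 : (25-17*e)^4 * (V*(1+e)) ≤ (25-17*e)^4 * (e^2*(1-e)^2*(1+e-e^2)) :=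
    mul_le_mul_of_nonneg_left hV' hq
  nlinarith [hb, h2, mul_nonneg (mul_nonneg (sq_nonneg e) (sq_nonneg (25-33*e))) he0.le]


end SmoothedTailAux

/-- Lemma 3 of the paper: Let `ε ∈ (0,1/3]`, let `S` have mean `μ > 0` and
standard deviation at most `εμ/√f(ε)`, and let `R` be uniform on `[1−ε, 1+ε]`
independent of `S`.  Then `P(SR ≤ μ − εμ) ≤ 1/4` and `P(SR ≥ μ + εμ) ≤ 1/4`. -/
theorem smoothed_tail_bounds {Ω : Type*} [MeasureSpace Ω]
    [IsProbabilityMeasure (ℙ : Measure Ω)]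
    (ε μ : ℝ) (hε : ε ∈ Set.Ioc (0 : ℝ) (1 / 3)) (hμ : 0 < μ)
    (S R : Ω → ℝ) (hSm : Measurable S) (hRm : Measurable R)
    (hS2 : MemLp S 2 ℙ)
    (hmean : ∫ ω, S ω ∂ℙ = μ)
    (hsd : Real.sqrt (variance S ℙ) ≤ ε * μ / Real.sqrt (nuisance ε))
    (hR : Measure.map R ℙ = uniformIcc (1 - ε) (1 + ε))
    (hindep : IndepFun S R ℙ) :
    ℙ {ω | S ω * R ω ≤ μ - ε * μ} ≤ 1 / 4 ∧
      ℙ {ω | μ + ε * μ ≤ S ω * R ω} ≤ 1 / 4 := by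
  obtain ⟨hε0, hε3⟩ := hε
  have h1e : (0:ℝ) < 1 - ε := by linarith
  have h1e' : (0:ℝ) < 1 + ε := by linarith
  have hfpos : 0 < nuisance ε := by
    rw [nuisance]
    apply div_pos h1e' (mul_pos (pow_pos h1e 2) (by nlinarith))
  have hVar : variance S ℙ ≤ ε^2*μ^2*(1-ε)^2*(1+ε-ε^2)/(1+ε) := by
    have h1 : variance S ℙ ≤ (ε*μ/Real.sqrt (nuisance ε))^2 := by
      calc variance S ℙ = Real.sqrt (variance S ℙ)^2 :=
            (Real.sq_sqrt (variance_nonneg S ℙ)).symm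
        _ ≤ (ε*μ/Real.sqrt (nuisance ε))^2 := pow_le_pow_left₀ (Real.sqrt_nonneg _) hsd 2
    have h3 : (ε*μ/Real.sqrt (nuisance ε))^2 = ε^2*μ^2/nuisance ε := by
      rw [div_pow, mul_pow, Real.sq_sqrt hfpos.le]
    have h4 : ε^2*μ^2/nuisance ε = ε^2*μ^2*(1-ε)^2*(1+ε-ε^2)/(1+ε) := by
      have hq : (0:ℝ) < 1+ε-ε^2 := by nlinarith
      rw [nuisance]
      rw [div_div_eq_mul_div]
      ring
    rw [h3, h4] at h1
    exact h1
  have hW : variance S ℙ / μ^2 ≤ ε^2*(1-ε)^2*(1+ε-ε^2)/(1+ε) := by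
    rw [div_le_iff₀ (by positivity)]
    calc variance S ℙ ≤ ε^2*μ^2*(1-ε)^2*(1+ε-ε^2)/(1+ε) := hVar
      _ = ε^2*(1-ε)^2*(1+ε-ε^2)/(1+ε)*μ^2 := by ring
  constructor
  · rcases le_or_gt ε (1/5) with hcase | hcase
    · exact glue_lower ε μ 1 (ε*(1-2*ε)) (8*ε^2*(1-ε)^2) hε0 hε3 hμ S R hSm hRm hS2 hmean
        hR hindep zero_le_one (by nlinarith) (by positivity)
        (fun τ h1 h2 => keyA ε τ hε0 hcase h1 h2)
        (by
          have h5 := objA ε (variance S ℙ/μ^2) hε0 hε3 h1e' hW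
          calc 1^2/μ^2*variance S ℙ + (ε*(1-2*ε))^2
              = variance S ℙ/μ^2 + (ε*(1-2*ε))^2 := by ring
            _ ≤ (8*ε^2*(1-ε)^2)/4 := h5)
    · exact glue_lower ε μ ((25-17*ε)^2) (8*ε*(25-33*ε)) (1000000*ε^2*(1-ε)^2) hε0 hε3 hμ
        S R hSm hRm hS2 hmean hR hindep (sq_nonneg _) (by nlinarith) (by positivity)
        (fun τ h1 h2 => keyB ε τ hcase.le hε3 h1 h2)
        (by
          have h5 := objB ε (variance S ℙ/μ^2) hcase.le hε3 h1e' hε0 hW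
          calc ((25-17*ε)^2)^2/μ^2*variance S ℙ + (8*ε*(25-33*ε))^2
              = (25-17*ε)^4*(variance S ℙ/μ^2) + (8*ε*(25-33*ε))^2 := by ring
            _ ≤ (1000000*ε^2*(1-ε)^2)/4 := h5)
  · exact glue_upper ε μ 1 (ε*(1+2*ε)) (8*ε^2*(1+ε)^2) hε0 hε3 hμ S R hSm hRm hS2 hmean
      hR hindep zero_le_one (by positivity) (by positivity)
      (fun u h1 => keyC ε u hε0 hε3 h1)
      (by
        have h5 := objC ε (variance S ℙ/μ^2) hε0 hε3 h1e' hW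
        calc 1^2/μ^2*variance S ℙ + (ε*(1+2*ε))^2
            = variance S ℙ/μ^2 + (ε*(1+2*ε))^2 := by ring
          _ ≤ (8*ε^2*(1+ε)^2)/4 := h5)
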